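/- Let (V, ⟨−,−⟩, s) be a Serre lattice over ℚ of surface* type, n = dim V, and set F¹V := ker((s−1)²), F²V := im((s−1)²). Then F²V ⊆ F¹V, (s − 1)(V) ⊆ F¹V, (s − 1)(F¹V) = F²V (in particular (s−1)(F¹V) ⊆ F²V and (s−1)(F²V) = 0), dim F¹V = n − 1 and dim F²V = 1. -/

import Mathlib

open Module LinearMap

private lemma pow_finrank_eq_zero' {K V : Type*} [Field K] [AddCommGroup V] [Module K V]
    [FiniteDimensional K V] {f : Module.End K V} (h : IsNilpotent f) :
    f ^ Module.finrank K V = 0 := by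
  obtain ⟨m, hm⟩ := h
  have h1 := Module.End.ker_pow_le_ker_pow_finrank f m
  rw [hm, LinearMap.ker_zero] at h1
  exact LinearMap.ker_eq_top.mp (top_le_iff.mp h1)

theorem codimension_filtration (V : Type*) [AddCommGroup V] [Module ℚ V]
    [FiniteDimensional ℚ V]
    (B : V →ₗ[ℚ] V →ₗ[ℚ] ℚ) (hB : ∀ v, (∀ w, B v w = 0) → v = 0)
    (s : V →ₗ[ℚ] V) (hbij : Function.Bijective s)
    (hserre : ∀ v w, B v (s w) = B w v)
    (huni : (s - 1) ^ Module.finrank ℚ V = 0)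
    (hrank : Module.finrank ℚ (LinearMap.range (s - 1)) ≤ 2)
    (hstar : (s - 1) ^ 2 ≠ 0) :
    LinearMap.range ((s - 1) ^ 2) ≤ LinearMap.ker ((s - 1) ^ 2) ∧
      LinearMap.range (s - 1) ≤ LinearMap.ker ((s - 1) ^ 2) ∧
      Submodule.map (s - 1) (LinearMap.ker ((s - 1) ^ 2)) = LinearMap.range ((s - 1) ^ 2) ∧
      Submodule.map (s - 1) (LinearMap.range ((s - 1) ^ 2)) = ⊥ ∧
      Module.finrank ℚ (LinearMap.ker ((s - 1) ^ 2)) = Module.finrank ℚ V - 1 ∧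
      Module.finrank ℚ (LinearMap.range ((s - 1) ^ 2)) = 1 := by
  set N : V →ₗ[ℚ] V := s - 1 with hN
  have hnil : IsNilpotent N := ⟨_, huni⟩
  have hmt : Set.MapsTo N (LinearMap.range N) (LinearMap.range N) :=
    fun x _ => LinearMap.mem_range_self N x
  set f : Module.End ℚ ↥(LinearMap.range N) := N.restrict hmt with hf
  have hfnil : IsNilpotent f := Module.End.isNilpotent.restrict hmt hnil
  have hf0 : f ^ finrank ℚ ↥(LinearMap.range N) = 0 := pow_finrank_eq_zero' hfnil
  -- f^2 = 0
  have hf2 : f ^ 2 = 0 := by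
    have : f ^ 2 = f ^ (2 - finrank ℚ ↥(LinearMap.range N)) *
        f ^ finrank ℚ ↥(LinearMap.range N) := by
      rw [← pow_add]; congr 1; omega
    rw [this, hf0, mul_zero]
  have hres : ∀ (k : ℕ) (x : ↥(LinearMap.range N)), ((f ^ k) x : V) = (N ^ k) (x : V) := by
    intro k x
    rw [hf, Module.End.pow_restrict k hmt, LinearMap.restrict_apply]
  -- N^3 = 0
  have hN3 : N ^ 3 = 0 := by
    ext v
    have h1 : ((f ^ 2) ⟨N v, LinearMap.mem_range_self N v⟩ : V) = (N ^ 2) (N v) := hres 2 _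
    rw [hf2] at h1
    simp only [LinearMap.zero_apply, ZeroMemClass.coe_zero] at h1
    have : (N ^ 3) v = (N ^ 2) (N v) := by
      rw [pow_succ']; rfl
    rw [this, ← h1]; rfl
  -- rank N = 2
  have hr2 : finrank ℚ ↥(LinearMap.range N) = 2 := by
    by_contra h
    have hle1 : finrank ℚ ↥(LinearMap.range N) ≤ 1 := by omega
    have hf1 : f = 0 := by
      have : f = f ^ (1 - finrank ℚ ↥(LinearMap.range N)) *
          f ^ finrank ℚ ↥(LinearMap.range N) := by
        rw [← pow_add]
        conv_lhs => rw [← pow_one f]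
        congr 1; omega
      rw [this, hf0, mul_zero]
    apply hstar
    ext v
    have h1 : ((f ^ 1) ⟨N v, LinearMap.mem_range_self N v⟩ : V) = (N ^ 1) (N v) := hres 1 _
    rw [hf1] at h1
    simp only [one_pow, LinearMap.zero_apply, ZeroMemClass.coe_zero, pow_one] at h1
    have : (N ^ 2) v = N (N v) := by rw [pow_two]; rfl
    simp [this, ← h1]
  -- range N² ≤ range N
  have hr21 : LinearMap.range (N ^ 2) ≤ LinearMap.range N := by
    rintro x ⟨v, rfl⟩
    exact ⟨N v, by rw [pow_two]; rfl⟩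
  -- N kills range N²
  have hkill : ∀ v : V, N ((N ^ 2) v) = 0 := by
    intro v
    have : N ((N ^ 2) v) = (N ^ 3) v := by rw [pow_succ]; rfl
    rw [this, hN3, LinearMap.zero_apply]
  -- rank N² = 1
  have hrk2 : finrank ℚ ↥(LinearMap.range (N ^ 2)) = 1 := by
    have hle : finrank ℚ ↥(LinearMap.range (N ^ 2)) ≤ 2 := by
      have := Submodule.finrank_mono hr21; omega
    have hne0 : finrank ℚ ↥(LinearMap.range (N ^ 2)) ≠ 0 := by
      intro h0
      apply hstar
      rw [← LinearMap.range_eq_bot, ← Submodule.finrank_eq_zero]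
      exact h0
    have hne2 : finrank ℚ ↥(LinearMap.range (N ^ 2)) ≠ 2 := by
      intro h2
      have heq : LinearMap.range (N ^ 2) = LinearMap.range N :=
        Submodule.eq_of_le_of_finrank_le hr21 (by rw [hr2, h2])
      apply hstar
      ext v
      have : N v ∈ LinearMap.range (N ^ 2) := heq ▸ LinearMap.mem_range_self N v
      obtain ⟨w, hw⟩ := this
      have : (N ^ 2) v = N (N v) := by rw [pow_two]; rfl
      rw [LinearMap.zero_apply, this, ← hw, hkill]
    omega
  have hn := LinearMap.finrank_range_add_finrank_ker (N ^ 2)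
  have hnN := LinearMap.finrank_range_add_finrank_ker N
  have hkerN2 : finrank ℚ ↥(LinearMap.ker (N ^ 2)) = finrank ℚ V - 1 := by omega
  have hkerN : finrank ℚ ↥(LinearMap.ker N) = finrank ℚ V - 2 := by omega
  have hnbig : 2 ≤ finrank ℚ V := by
    have := Submodule.finrank_le (LinearMap.range N); omega
  -- ker N ≤ ker N²
  have hkk : LinearMap.ker N ≤ LinearMap.ker (N ^ 2) := by
    intro x hx
    simp only [LinearMap.mem_ker] at hx ⊢
    rw [pow_two, Module.End.mul_apply, hx, map_zero]
  -- range N ≤ ker N²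
  have hrk : LinearMap.range N ≤ LinearMap.ker (N ^ 2) := by
    rintro x ⟨v, rfl⟩
    simp only [LinearMap.mem_ker]
    have : (N ^ 2) (N v) = (N ^ 3) v := by rw [pow_succ']; rfl
    rw [this, hN3, LinearMap.zero_apply]
  -- range N² ≤ map N (ker N²)
  have hsub : LinearMap.range (N ^ 2) ≤ Submodule.map N (LinearMap.ker (N ^ 2)) := by
    rintro x ⟨v, rfl⟩
    exact ⟨N v, hrk (LinearMap.mem_range_self N v), by rw [pow_two]; rfl⟩
  -- finrank of map N (ker N²) = 1 via rank-nullity for domRestrict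
  have hmap : Submodule.map N (LinearMap.ker (N ^ 2)) = LinearMap.range (N ^ 2) := by
    set g := N.domRestrict (LinearMap.ker (N ^ 2)) with hg
    have hrg : LinearMap.range g = Submodule.map N (LinearMap.ker (N ^ 2)) :=
      LinearMap.range_domRestrict _ _
    have hkg : LinearMap.ker g =
        Submodule.comap (LinearMap.ker (N ^ 2)).subtype (LinearMap.ker N) := by
      rw [hg, LinearMap.domRestrict, LinearMap.ker_comp]
    have hkgfin : finrank ℚ ↥(LinearMap.ker g) = finrank ℚ ↥(LinearMap.ker N) := by
      rw [hkg]
      exact (Submodule.comapSubtypeEquivOfLe hkk).finrank_eq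
    have hrn := LinearMap.finrank_range_add_finrank_ker g
    rw [hrg, hkgfin] at hrn
    have hmfin : finrank ℚ ↥(Submodule.map N (LinearMap.ker (N ^ 2))) ≤ 1 := by omega
    exact (Submodule.eq_of_le_of_finrank_le hsub (by omega)).symm
  refine ⟨?_, hrk, hmap, ?_, hkerN2, hrk2⟩
  · rintro x ⟨v, rfl⟩
    simp only [LinearMap.mem_ker]
    have e2 : ∀ w : V, (N ^ 2) w = N (N w) := fun w => by rw [pow_two]; rfl
    have e3 : ∀ w : V, (N ^ 3) w = N (N (N w)) := fun w => by
      rw [pow_succ, Module.End.mul_apply, e2]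
    rw [e2, e2, ← e3, hN3, LinearMap.zero_apply]
  · rw [eq_bot_iff]
    rintro x ⟨y, ⟨v, rfl⟩, rfl⟩
    simpa using hkill v
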